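/- Let n ≥ 3, k = 4, and for d ≥ n-1 let h_d = (2+d-n)(d^2+(4-2n)d+4n^2-4n+3)/3. Then for all d ≥ n-1, the largest integer ℓ such that C(ℓ+d-1, ℓ-1) < h_d equals 3; in particular C(d+2, 2) < h_d ≤ C(d+3, 3) for d = n-1, and the inequality C(d+2,2) < h_d persists for all n-1 ≤ d ≤ 2n-3. -/
import Mathlib

lemma ch2 (d : ℕ) : 2 * Nat.choose (d + 2) 2 = (d + 1) * (d + 2) := by
  induction d with
  | zero => rfl
  | succ k ih =>
    have : Nat.choose (k + 3) 2 = Nat.choose (k + 2) 1 + Nat.choose (k + 2) 2 :=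
      Nat.choose_succ_succ' (k + 2) 1
    rw [show k + 1 + 2 = k + 3 from rfl, this, Nat.choose_one_right]
    nlinarith [ih]

lemma ch3 (d : ℕ) : 6 * Nat.choose (d + 3) 3 = (d + 1) * (d + 2) * (d + 3) := by
  induction d with
  | zero => rfl
  | succ k ih =>
    have h1 : Nat.choose (k + 4) 3 = Nat.choose (k + 3) 2 + Nat.choose (k + 3) 3 :=
      Nat.choose_succ_succ' (k + 3) 2
    have h2 := ch2 (k + 1)
    rw [show k + 1 + 3 = k + 4 from rfl, h1]
    rw [show k + 1 + 2 = k + 3 from rfl] at h2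
    nlinarith [ih, h2]

theorem stmt11 (n d : ℕ) (hn : 3 ≤ n) (hd1 : n - 1 ≤ d) (hd2 : d ≤ 2 * n - 3) :
    ((Nat.choose (d + 2) 2 : ℚ)
        < (2 + (d : ℚ) - n) * ((d : ℚ) ^ 2 + (4 - 2 * n) * d + 4 * (n : ℚ) ^ 2 - 4 * n + 3) / 3
      ∧ (2 + (d : ℚ) - n) * ((d : ℚ) ^ 2 + (4 - 2 * n) * d + 4 * (n : ℚ) ^ 2 - 4 * n + 3) / 3
        ≤ (Nat.choose (d + 3) 3 : ℚ)) ∧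
    IsGreatest {ℓ : ℕ | 1 ≤ ℓ ∧ ((Nat.choose (ℓ + d - 1) (ℓ - 1) : ℚ)
        < (2 + (d : ℚ) - n) * ((d : ℚ) ^ 2 + (4 - 2 * n) * d
            + 4 * (n : ℚ) ^ 2 - 4 * n + 3) / 3)} 3 := by
  have hN : (3 : ℚ) ≤ (n : ℚ) := by exact_mod_cast hn
  have hD1 : (n : ℚ) - 1 ≤ (d : ℚ) := by
    have : n - 1 + 1 = n := by omega
    have h' : (((n - 1 : ℕ)) : ℚ) ≤ (d : ℚ) := by exact_mod_cast hd1
    have h2 : ((n - 1 : ℕ) : ℚ) = (n : ℚ) - 1 := by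
      push_cast [Nat.cast_sub (by omega : 1 ≤ n)]; ring
    linarith [h2 ▸ h']
  have hD2 : (d : ℚ) ≤ 2 * (n : ℚ) - 3 := by
    have h' : (d : ℚ) ≤ ((2 * n - 3 : ℕ) : ℚ) := by exact_mod_cast hd2
    have h2 : ((2 * n - 3 : ℕ) : ℚ) = 2 * (n : ℚ) - 3 := by
      push_cast [Nat.cast_sub (by omega : 3 ≤ 2 * n)]; ring
    linarith [h2 ▸ h']
  have hc2 : (Nat.choose (d + 2) 2 : ℚ) = ((d : ℚ) + 1) * ((d : ℚ) + 2) / 2 := by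
    have := ch2 d
    have : (2 : ℚ) * (Nat.choose (d + 2) 2 : ℚ) = ((d : ℚ) + 1) * ((d : ℚ) + 2) := by
      exact_mod_cast congrArg (Nat.cast : ℕ → ℚ) this
    linarith
  have hc3 : (Nat.choose (d + 3) 3 : ℚ) = ((d : ℚ) + 1) * ((d : ℚ) + 2) * ((d : ℚ) + 3) / 6 := by
    have := ch3 d
    have : (6 : ℚ) * (Nat.choose (d + 3) 3 : ℚ)
        = ((d : ℚ) + 1) * ((d : ℚ) + 2) * ((d : ℚ) + 3) := by
      exact_mod_cast congrArg (Nat.cast : ℕ → ℚ) this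
    linarith
  set D := (d : ℚ)
  set N := (n : ℚ)
  have ha : 0 ≤ D - N + 1 := by linarith
  have hb : 0 ≤ 2 * N - 3 - D := by linarith
  have key1 : (Nat.choose (d + 2) 2 : ℚ)
      < (2 + D - N) * (D ^ 2 + (4 - 2 * N) * D + 4 * N ^ 2 - 4 * N + 3) / 3 := by
    rw [hc2]
    nlinarith [mul_nonneg ha hb, mul_nonneg ha ha, mul_nonneg (mul_nonneg ha ha) ha,
      mul_nonneg ha (by linarith : (0:ℚ) ≤ N - 3), sq_nonneg (D - N + 1), hN]
  have key2 : (2 + D - N) * (D ^ 2 + (4 - 2 * N) * D + 4 * N ^ 2 - 4 * N + 3) / 3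
      ≤ (Nat.choose (d + 3) 3 : ℚ) := by
    rw [hc3]
    nlinarith [mul_nonneg ha hb, mul_nonneg (mul_nonneg ha hb) ha,
      mul_nonneg (mul_nonneg ha ha) ha, mul_nonneg hb (by linarith : (0:ℚ) ≤ N - 3),
      mul_nonneg ha (by linarith : (0:ℚ) ≤ N - 3),
      mul_nonneg (mul_nonneg hb hb) hb, hN]
  refine ⟨⟨key1, key2⟩, ⟨by norm_num, by rw [show 3 + d - 1 = d + 2 from by omega]; exact key1⟩, ?_⟩
  rintro ℓ ⟨hℓ1, hℓ2⟩
  by_contra h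
  push_neg at h
  have hℓ4 : 4 ≤ ℓ := by omega
  have e1 : Nat.choose (ℓ + d - 1) (ℓ - 1) = Nat.choose (ℓ + d - 1) d := by
    rw [← Nat.choose_symm (by omega : ℓ - 1 ≤ ℓ + d - 1)]
    congr 1 <;> omega
  have e2 : Nat.choose (d + 3) 3 = Nat.choose (d + 3) d := by
    rw [← Nat.choose_symm (by omega : 3 ≤ d + 3)]
    congr 1 <;> omega
  have mono : Nat.choose (d + 3) d ≤ Nat.choose (ℓ + d - 1) d :=
    Nat.choose_le_choose d (by omega)
  have : (Nat.choose (d + 3) 3 : ℚ) ≤ (Nat.choose (ℓ + d - 1) (ℓ - 1) : ℚ) := by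
    rw [e1, e2]; exact_mod_cast mono
  linarith
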